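/- For a unit s in a commutative ring with s − s⁻¹ invertible, and any integer n ≥ 2, the quantum integer satisfies the factorization [n] = s^{−n+1} · ∏_{1 < j, j ∣ n} Φ_j(s²), where the product runs over all divisors j of n with j > 1 and Φ_j is the j-th cyclotomic polynomial evaluated at s². -/

import Mathlib

open Finset

/-- For a unit `s` in a commutative ring with `s - s⁻¹` invertible and `n ≥ 2`, the quantum
integer `[n] = (sⁿ - s⁻ⁿ)/(s - s⁻¹)` factors as `s^{-n+1} ∏_{1<j∣n} Φ_j(s²)`. -/
theorem quantum_integer_cyclotomic_factorization (k : Type*) [CommRing k] (s : kˣ)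
    (hdiff : IsUnit ((s : k) - ((s⁻¹ : kˣ) : k)))
    (n : ℕ) (hn : 2 ≤ n)
    (qn : k) (hqn : qn * ((s : k) - ((s⁻¹ : kˣ) : k)) = (s : k) ^ n - ((s⁻¹ : kˣ) : k) ^ n) :
    qn = ((s⁻¹ : kˣ) : k) ^ (n - 1) *
      ∏ j ∈ n.divisors.filter (fun j => 1 < j),
        (Polynomial.cyclotomic j k).eval ((s : k) ^ 2) := by
  set P := ∏ j ∈ n.divisors.filter (fun j => 1 < j),
      (Polynomial.cyclotomic j k).eval ((s : k) ^ 2) with hP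
  have hs : (s : k) * ((s⁻¹ : kˣ) : k) = 1 := by
    rw [← Units.val_mul, mul_inv_cancel, Units.val_one]
  have hsq : (s : k) ^ 2 - 1 = (s : k) * ((s : k) - ((s⁻¹ : kˣ) : k)) := by
    rw [mul_sub, hs]; ring
  have hu : IsUnit ((s : k) ^ 2 - 1) := by
    rw [hsq]; exact s.isUnit.mul hdiff
  have hn0 : 0 < n := by omega
  have hprod : ((s : k) ^ 2) ^ n - 1 = ((s : k) ^ 2 - 1) * P := by
    have h := congrArg (Polynomial.eval ((s : k) ^ 2))
      (Polynomial.prod_cyclotomic_eq_X_pow_sub_one hn0 k)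
    simp only [Polynomial.eval_prod, Polynomial.eval_sub, Polynomial.eval_pow,
      Polynomial.eval_X, Polynomial.eval_one] at h
    have hmem : 1 ∈ n.divisors := Nat.one_mem_divisors.2 (by omega)
    have hdiff : n.divisors \ {1} = n.divisors.filter (fun j => 1 < j) := by
      ext a
      simp only [Finset.mem_sdiff, Finset.mem_singleton, Finset.mem_filter]
      constructor
      · rintro ⟨ha, hne⟩
        exact ⟨ha, lt_of_le_of_ne (Nat.pos_of_mem_divisors ha) (Ne.symm hne)⟩
      · rintro ⟨ha, hlt⟩
        exact ⟨ha, by omega⟩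
    rw [Finset.prod_eq_prod_diff_singleton_mul hmem, hdiff] at h
    rw [← h, Polynomial.cyclotomic_one]
    simp [mul_comm, hP]
  have hss : (s : k) ^ n * ((s⁻¹ : kˣ) : k) ^ n = 1 := by
    rw [← mul_pow, hs, one_pow]
  have key : (s : k) ^ (n - 1) * qn * ((s : k) ^ 2 - 1) = P * ((s : k) ^ 2 - 1) := by
    have hpow : (s : k) ^ (n - 1) * (s : k) = (s : k) ^ n := by
      rw [← pow_succ]; congr 1; omega
    calc (s : k) ^ (n - 1) * qn * ((s : k) ^ 2 - 1)
        = (s : k) ^ (n - 1) * (s : k) * (qn * ((s : k) - ((s⁻¹ : kˣ) : k))) := by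
          rw [hsq]; ring
      _ = (s : k) ^ n * ((s : k) ^ n - ((s⁻¹ : kˣ) : k) ^ n) := by rw [hpow, hqn]
      _ = ((s : k) ^ 2) ^ n - (s : k) ^ n * ((s⁻¹ : kˣ) : k) ^ n := by ring
      _ = ((s : k) ^ 2) ^ n - 1 := by rw [hss]
      _ = P * ((s : k) ^ 2 - 1) := by rw [hprod, mul_comm]
  have key2 : (s : k) ^ (n - 1) * qn = P := hu.mul_right_cancel key
  have hinv : ((s⁻¹ : kˣ) : k) ^ (n - 1) * (s : k) ^ (n - 1) = 1 := by
    rw [← mul_pow, mul_comm, hs, one_pow]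
  calc qn = ((s⁻¹ : kˣ) : k) ^ (n - 1) * (s : k) ^ (n - 1) * qn := by rw [hinv, one_mul]
    _ = ((s⁻¹ : kˣ) : k) ^ (n - 1) * ((s : k) ^ (n - 1) * qn) := by ring
    _ = ((s⁻¹ : kˣ) : k) ^ (n - 1) * P := by rw [key2]
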